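/- Let A, B > 0, α, β > 0, D_inf ≥ 0, E, ℓ be real numbers and let N > 0, D > 0 and λ be reals satisfying 6·D + 2·D_inf = −λ·α·A·N^(−α−1), 6·N = −λ·β·B·D^(−β−1), and the constraint E + A·N^(−α) + B·D^(−β) = ℓ. Then D satisfies 0 = (E − ℓ) + (β·B/α + B)·D^(−β) + (D_inf·β·B/(3·α))·D^(−β−1). -/

import Mathlib

/-- The Lagrange stationarity conditions together with the iso-loss constraint
`E + A·N^(−α) + B·D^(−β) = ℓ` imply Eq. 11 of the paper. -/
theorem no_analytic_eq11 (A B α β Dinf E ℓ N D lam : ℝ)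
    (hA : 0 < A) (hB : 0 < B) (hα : 0 < α) (hβ : 0 < β) (hDinf : 0 ≤ Dinf)
    (hN : 0 < N) (hD : 0 < D)
    (h1 : 6 * D + 2 * Dinf = -lam * α * A * N ^ (-α - 1))
    (h2 : 6 * N = -lam * β * B * D ^ (-β - 1))
    (hcon : E + A * N ^ (-α) + B * D ^ (-β) = ℓ) :
    0 = (E - ℓ) + (β * B / α + B) * D ^ (-β)
        + (Dinf * β * B / (3 * α)) * D ^ (-β - 1) := by
  have ha : N ^ (-α) = N * N ^ (-α - 1) := by
    have h := Real.rpow_add hN 1 (-α - 1)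
    rw [Real.rpow_one, show (1 : ℝ) + (-α - 1) = -α by ring] at h
    exact h
  have hd : D ^ (-β) = D * D ^ (-β - 1) := by
    have h := Real.rpow_add hD 1 (-β - 1)
    rw [Real.rpow_one, show (1 : ℝ) + (-β - 1) = -β by ring] at h
    exact h
  have hlam : (-lam) ≠ 0 := by
    intro h
    rw [show -lam = 0 from h] at h2
    simp at h2
    nlinarith
  have big : (-lam) * (α * (N * (A * N ^ (-α - 1))))
      = (-lam) * (β * (B * D ^ (-β - 1)) * (D + Dinf / 3)) := by
    have e1 : (6 * D + 2 * Dinf) * N = -lam * α * A * N ^ (-α - 1) * N := by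
      rw [h1]
    have e2 : 6 * N * D = -lam * β * B * D ^ (-β - 1) * D := by rw [h2]
    have e3 : 6 * N * (Dinf / 3) = -lam * β * B * D ^ (-β - 1) * (Dinf / 3) := by
      rw [h2]
    nlinarith [e1, e2, e3]
  have key := mul_left_cancel₀ hlam big
  rw [hd] at hcon ⊢; rw [ha] at hcon
  have hα' : α ≠ 0 := ne_of_gt hα
  field_simp
  linear_combination (-3 * α) * hcon + 3 * key
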